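/- Let ψ(u) = ( sin(π/2 − u) / (π/2 − u) ) · cos(π/2 − u)^{1/7} and Θ(u) = sin(π/2 − u)⁷ cos(π/2 − u) for u ∈ (0, π/2), and define F(u) = 6 ψ(u) ψ''(u) + ψ(u) Θ(u)^{-1} (Θψ)'(u) − 7 ψ'(u)². Then F(u) + (172/(49π²)) u^{−12/7} = O(u^{−5/7}) as u → 0⁺; equivalently F(u) = −(172/(49π²)) u^{−12/7} + O(u^{−5/7}). -/

import Mathlib

open Real Filter Asymptotics
open scoped Topology
open Set

noncomputable def psie (x : ℝ) : ℝ := Real.cos x / (π/2 - x) * Real.sin x ^ ((1:ℝ)/7)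

noncomputable def psi1 (x : ℝ) : ℝ :=
  (-Real.sin x * (π / 2 - x) - Real.cos x * (0 - 1)) / (π / 2 - x) ^ 2 * Real.sin x ^ ((1:ℝ)/7)
  + Real.cos x / (π / 2 - x) * (1 / 7 * Real.sin x ^ ((1:ℝ)/7 - 1) * Real.cos x)

noncomputable def gg (u : ℝ) : ℝ := Real.cos u / (π/2 - u)
noncomputable def gg1 (u : ℝ) : ℝ := -Real.sin u / (π/2 - u) + Real.cos u / (π/2 - u)^2
noncomputable def gg2 (u : ℝ) : ℝ :=
  -Real.cos u / (π/2-u) - 2*Real.sin u/(π/2-u)^2 + 2*Real.cos u/(π/2-u)^3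
noncomputable def PP (u : ℝ) : ℝ :=
  6 * gg u * gg2 u - 7 * (gg1 u)^2 - (6/7) * (gg u)^2
    - 8 * Real.sin u * Real.cos u/(π/2-u)^2 + Real.cos u^2/(π/2-u)^3
noncomputable def QQ (u : ℝ) : ℝ :=
  -(2/7) * Real.cos u * gg u * gg1 u + (8/7) * Real.cos u * (gg u)^2

lemma hq_pos {u : ℝ} (hu1 : u < 1/2) : 0 < π/2 - u := by
  have := Real.pi_gt_three; linarith

lemma hs_pos {u : ℝ} (hu0 : 0 < u) (hu1 : u < 1/2) : 0 < Real.sin u := by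
  have := Real.pi_gt_three
  exact Real.sin_pos_of_pos_of_lt_pi hu0 (by linarith)

lemma hc_pos {u : ℝ} (hu0 : 0 < u) (hu1 : u < 1/2) : 0 < Real.cos u := by
  have := Real.pi_gt_three
  exact Real.cos_pos_of_mem_Ioo ⟨by linarith, by linarith⟩

lemma hasDerivAt_psie {u : ℝ} (hu0 : 0 < u) (hu1 : u < 1/2) :
    HasDerivAt psie (psi1 u) u := by
  have hq := hq_pos hu1
  have hs := hs_pos hu0 hu1
  have hq' : HasDerivAt (fun x : ℝ => π/2 - x) (0 - 1) u :=
    (hasDerivAt_const u (π/2)).sub (hasDerivAt_id u)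
  have hCc : HasDerivAt (fun x : ℝ => Real.cos x / (π/2 - x))
      ((-Real.sin u * (π / 2 - u) - Real.cos u * (0 - 1)) / (π / 2 - u) ^ 2) u :=
    (Real.hasDerivAt_cos u).div hq' hq.ne'
  have hB : HasDerivAt (fun x : ℝ => Real.sin x ^ ((1:ℝ)/7))
      (1 / 7 * Real.sin u ^ ((1:ℝ)/7 - 1) * Real.cos u) u :=
    (Real.hasDerivAt_rpow_const (p := (1:ℝ)/7) (Or.inl hs.ne')).comp u (Real.hasDerivAt_sin u)
  exact hCc.mul hB

set_option maxHeartbeats 2000000 in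
lemma key_id (ψ Θ F : ℝ → ℝ)
    (hψ : ∀ u, ψ u = (Real.sin (π / 2 - u) / (π / 2 - u)) *
        Real.cos (π / 2 - u) ^ ((1 : ℝ) / 7))
    (hΘ : ∀ u, Θ u = Real.sin (π / 2 - u) ^ 7 * Real.cos (π / 2 - u))
    (hF : ∀ u, F u = 6 * ψ u * deriv (deriv ψ) u
        + ψ u * (Θ u)⁻¹ * deriv (fun t => Θ t * ψ t) u
        - 7 * (deriv ψ u) ^ 2)
    {u : ℝ} (hu0 : 0 < u) (hu1 : u < 1/2) :
    F u = PP u * (Real.sin u ^ ((1:ℝ)/7))^2 + QQ u / (Real.sin u ^ ((1:ℝ)/7))^5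
      - 43/49 * (Real.cos u^2/(π/2-u))^2 / (Real.sin u ^ ((1:ℝ)/7))^12 := by
  have hq := hq_pos hu1
  have hs := hs_pos hu0 hu1
  have hc := hc_pos hu0 hu1
  have hψe : ψ = psie := funext fun x => by
    rw [hψ x, Real.sin_pi_div_two_sub, Real.cos_pi_div_two_sub]; rfl
  have hΘe : ∀ x, Θ x = Real.cos x ^ 7 * Real.sin x := fun x => by
    rw [hΘ x, Real.sin_pi_div_two_sub, Real.cos_pi_div_two_sub]
  have hmem : Ioo (0:ℝ) (1/2) ∈ 𝓝 u := isOpen_Ioo.mem_nhds ⟨hu0, hu1⟩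
  have hder1 : ∀ x ∈ Ioo (0:ℝ) (1/2), deriv ψ x = psi1 x := fun x hx => by
    rw [hψe]; exact (hasDerivAt_psie hx.1 hx.2).deriv
  have hev : deriv ψ =ᶠ[𝓝 u] psi1 := eventuallyEq_of_mem hmem hder1
  -- second derivative
  have hq' : HasDerivAt (fun x : ℝ => π/2 - x) (0 - 1) u :=
    (hasDerivAt_const u (π/2)).sub (hasDerivAt_id u)
  have hCc : HasDerivAt (fun x : ℝ => Real.cos x / (π/2 - x))
      ((-Real.sin u * (π / 2 - u) - Real.cos u * (0 - 1)) / (π / 2 - u) ^ 2) u :=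
    (Real.hasDerivAt_cos u).div hq' hq.ne'
  have hB : HasDerivAt (fun x : ℝ => Real.sin x ^ ((1:ℝ)/7))
      (1 / 7 * Real.sin u ^ ((1:ℝ)/7 - 1) * Real.cos u) u :=
    (Real.hasDerivAt_rpow_const (p := (1:ℝ)/7) (Or.inl hs.ne')).comp u (Real.hasDerivAt_sin u)
  have hB' : HasDerivAt (fun x : ℝ => Real.sin x ^ ((1:ℝ)/7 - 1))
      (((1:ℝ)/7 - 1) * Real.sin u ^ ((1:ℝ)/7 - 1 - 1) * Real.cos u) u :=
    (Real.hasDerivAt_rpow_const (p := (1:ℝ)/7 - 1) (Or.inl hs.ne')).comp u (Real.hasDerivAt_sin u)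
  have hN : HasDerivAt (fun x : ℝ => -Real.sin x * (π / 2 - x) - Real.cos x * (0 - 1))
      ((-Real.cos u * (π/2 - u) + -Real.sin u * (0-1)) - (-Real.sin u * (0-1))) u :=
    (((Real.hasDerivAt_sin u).neg.mul hq').sub ((Real.hasDerivAt_cos u).mul_const (0-1)))
  have hA := hN.div (hq'.pow 2) (pow_ne_zero 2 hq.ne')
  have hD := (hB'.const_mul ((1:ℝ)/7)).mul (Real.hasDerivAt_cos u)
  have H2 := (hA.mul hB).add (hCc.mul hD)
  have hd2 := hev.deriv_eq.trans H2.deriv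
  -- derivative of Θ * ψ
  have hTev : (fun t => Θ t * ψ t) =ᶠ[𝓝 u]
      (fun x => Real.cos x ^ 8 / (π/2 - x) * Real.sin x ^ ((8:ℝ)/7)) :=
    eventuallyEq_of_mem hmem (fun x hx => by
      have hsx := hs_pos hx.1 hx.2
      have hqx := hq_pos hx.2
      rw [hΘe x, hψe]
      show Real.cos x ^7 * Real.sin x * (Real.cos x/(π/2-x) * Real.sin x ^ ((1:ℝ)/7)) = _
      rw [show ((8:ℝ)/7) = 1 + 1/7 by norm_num, Real.rpow_add hsx, Real.rpow_one]
      ring)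
  have hT := (((Real.hasDerivAt_cos u).pow 8).div hq' hq.ne').mul
    ((Real.hasDerivAt_rpow_const (p := (8:ℝ)/7) (Or.inl hs.ne')).comp u (Real.hasDerivAt_sin u))
  have hd3 := hTev.deriv_eq.trans hT.deriv
  rw [hF u, hd2, hd3, hder1 u ⟨hu0, hu1⟩, hψe, hΘe u]
  simp only [psie, psi1, PP, QQ, gg, gg1, gg2]
  simp only [Function.comp_apply, Pi.pow_apply, Pi.div_apply, Pi.mul_apply]
  -- rpow conversions
  have e1 : Real.sin u ^ ((1:ℝ)/7 - 1) = Real.sin u ^ ((1:ℝ)/7) / Real.sin u := by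
    rw [Real.rpow_sub hs, Real.rpow_one]
  have e2 : Real.sin u ^ ((1:ℝ)/7 - 1 - 1)
      = Real.sin u ^ ((1:ℝ)/7) / Real.sin u / Real.sin u := by
    rw [Real.rpow_sub hs, Real.rpow_sub hs, Real.rpow_one]
  have e4 : Real.sin u ^ ((8:ℝ)/7 - 1) = Real.sin u ^ ((1:ℝ)/7) := by norm_num
  have e3 : Real.sin u ^ ((8:ℝ)/7) = Real.sin u * Real.sin u ^ ((1:ℝ)/7) := by
    rw [show ((8:ℝ)/7) = 1 + 1/7 by norm_num, Real.rpow_add hs, Real.rpow_one]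
  rw [e2, e1, e3, e4]
  have ht7 : (Real.sin u ^ ((1:ℝ)/7))^7 = Real.sin u := by
    rw [← Real.rpow_natCast (Real.sin u ^ ((1:ℝ)/7)) 7, ← Real.rpow_mul hs.le]
    norm_num
  have ht : (0:ℝ) < Real.sin u ^ ((1:ℝ)/7) := Real.rpow_pos_of_pos hs _
  set t := Real.sin u ^ ((1:ℝ)/7) with htd
  rw [show Real.sin u = t^7 from ht7.symm]
  set q : ℝ := π/2 - u with hqd
  field_simp
  ring

lemma abs_bdd_of_contOn {f : ℝ → ℝ} (h : ContinuousOn f (Icc (0:ℝ) (1/2))) :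
    ∃ C, 0 ≤ C ∧ ∀ u ∈ Icc (0:ℝ) (1/2), |f u| ≤ C := by
  obtain ⟨C, hC⟩ := isCompact_Icc.exists_bound_of_continuousOn h
  refine ⟨C, le_trans (abs_nonneg (f 0)) ?_, fun u hu => ?_⟩
  · have := hC 0 (by norm_num)
    rwa [Real.norm_eq_abs] at this
  · have := hC u hu
    rwa [Real.norm_eq_abs] at this

lemma qkey : ∀ x ∈ Icc (0:ℝ) (1/2), π/2 - x ≠ 0 := by
  intro x hx
  have h3 := Real.pi_gt_three
  simp only [Set.mem_Icc] at hx
  intro h; nlinarith [hx.1, hx.2]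

lemma qkey2 : ∀ (n : ℕ), ∀ x ∈ Icc (0:ℝ) (1/2), (π/2 - x) ^ n ≠ 0 :=
  fun n x hx => pow_ne_zero n (qkey x hx)

lemma PP_bdd : ∃ C, 0 ≤ C ∧ ∀ u ∈ Icc (0:ℝ) (1/2), |PP u| ≤ C := by
  apply abs_bdd_of_contOn
  unfold PP gg gg1 gg2
  fun_prop (disch := (first | exact qkey | exact qkey2 2 | exact qkey2 3))

lemma QQ_bdd : ∃ C, 0 ≤ C ∧ ∀ u ∈ Icc (0:ℝ) (1/2), |QQ u| ≤ C := by
  apply abs_bdd_of_contOn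
  unfold QQ gg gg1
  fun_prop (disch := (first | exact qkey | exact qkey2 2 | exact qkey2 3))


lemma ar0 {a C x y : ℝ} (h1 : |a| ≤ C) (h2 : x ≤ 1) (h3 : 0 ≤ x) (h4 : 1 ≤ y) :
    |a| * x ≤ C*y := by nlinarith [abs_nonneg a]

lemma ar1 {u s : ℝ} (hu0 : 0 < u) (hu1 : u < 1/2) (h : u - u^3/4 < s) : u/2 ≤ s := by
  nlinarith [mul_nonneg (mul_nonneg hu0.le (by linarith : (0:ℝ) ≤ 1/2 - u))
    (by linarith : (0:ℝ) ≤ 1/2 + u)]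

lemma ar2 {u s : ℝ} (hu0 : 0 < u) (hu1 : u < 1/2) (hs : 0 < s) (hs1 : s ≤ u)
    (h2 : u - u^3/4 < s) : (u/s)^2 - 1 ≤ u := by
  rw [div_pow, div_sub_one (pow_ne_zero 2 hs.ne'), div_le_iff₀ (pow_pos hs 2)]
  nlinarith [ar1 hu0 hu1 h2]

lemma ar3 {u s : ℝ} (hu0 : 0 < u) (hu1 : u < 1/2) (hs0 : 0 ≤ s) (hs1 : s ≤ u) :
    |(1 - s^2)^2*π^2 - (π/2-u)^2*4| ≤ 36*u := by
  have hπ3 : (3:ℝ) < π := Real.pi_gt_three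
  have hπ4 : π ≤ 4 := Real.pi_le_four
  have hssq : s^2 ≤ u^2 := by nlinarith
  have h16 : π^2 ≤ 16 := by nlinarith
  have hps : π^2*s^2 ≤ 16*u^2 := by nlinarith [sq_nonneg s]
  have hu2 : u^2 ≤ u/2 := by nlinarith
  have h1 : (1 - s^2)^2 ≤ 1 := by nlinarith [sq_nonneg s]
  have hsq2 : (1 - s^2)^2*π^2 ≤ π^2 :=
    le_of_sub_nonpos (by nlinarith [mul_le_mul_of_nonneg_right h1 (sq_nonneg π)])
  rw [abs_le]
  constructor
  · nlinarith [mul_nonneg (sq_nonneg π) (sq_nonneg (s^2))]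
  · nlinarith
lemma ar4 {u : ℝ} (hu0 : 0 < u) (hu1 : u < 1/2) : (9:ℝ) ≤ (π/2-u)^2*π^2 := by
  have hπ3 : (3:ℝ) < π := Real.pi_gt_three
  have h1 : (1:ℝ) ≤ (π/2-u) := by linarith
  have h2 : (9:ℝ) ≤ π^2 := by nlinarith
  have h3 : (1:ℝ) ≤ (π/2-u)^2 := by nlinarith
  nlinarith [mul_le_mul h3 h2 (by norm_num) (by positivity : (0:ℝ) ≤ (π/2-u)^2)]

lemma ar5 {D W u : ℝ} (hD4 : |D - 4/π^2| ≤ 4*u) (hW1 : 1 ≤ W)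
    (hW4 : W ≤ 4) (hWu : W - 1 ≤ u) (hu0 : 0 < u) : |D*W - 4/π^2| ≤ 17*u := by
  have hπ3 : (3:ℝ) < π := Real.pi_gt_three
  have hπp : (0:ℝ) < π^2 := by positivity
  have hpi1 : (4:ℝ)/π^2 ≤ 1 := by rw [div_le_one hπp]; nlinarith
  have hpi0 : (0:ℝ) ≤ 4/π^2 := by positivity
  have hW0 : (0:ℝ) ≤ W := by linarith
  have habs := abs_le.1 hD4
  have k1 : (D - 4/π^2)*W ≤ (4*u)*W := mul_le_mul_of_nonneg_right habs.2 hW0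
  have k2 : (4*u)*W ≤ (4*u)*4 := by nlinarith
  have k3 : (4/π^2)*(W-1) ≤ 1*u := mul_le_mul hpi1 hWu (by linarith) (by norm_num)
  have k4 : (-(4*u))*W ≤ (D - 4/π^2)*W := mul_le_mul_of_nonneg_right habs.1 hW0
  have k5 : (-(4*u))*4 ≤ (-(4*u))*W := by nlinarith
  have k6 : 0 ≤ (4/π^2)*(W-1) := mul_nonneg hpi0 (by linarith)
  have hid : D*W - 4/π^2 = (D - 4/π^2)*W + (4/π^2)*(W-1) := by ring
  rw [abs_le, hid]
  constructor <;> linarith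

set_option maxHeartbeats 1000000 in
lemma main_bound : ∃ C : ℝ, 0 ≤ C ∧ ∀ u : ℝ, 0 < u → u < 1/2 →
    |PP u * (Real.sin u ^ ((1:ℝ)/7))^2 + QQ u / (Real.sin u ^ ((1:ℝ)/7))^5
      - 43/49 * (Real.cos u^2/(π/2-u))^2 / (Real.sin u ^ ((1:ℝ)/7))^12
      + (172/(49*π^2)) * u ^ (-(12:ℝ)/7)| ≤ C * u ^ (-(5:ℝ)/7) := by
  obtain ⟨CP, hCP0, hCP⟩ := PP_bdd
  obtain ⟨CQ, hCQ0, hCQ⟩ := QQ_bdd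
  refine ⟨CP + 2*CQ + 15, by positivity, fun u hu0 hu1 => ?_⟩
  have hπ3 : (3:ℝ) < π := Real.pi_gt_three
  have hπ0 : (π:ℝ) ≠ 0 := by positivity
  have hq : 0 < π/2 - u := by linarith
  have hs : 0 < Real.sin u := Real.sin_pos_of_pos_of_lt_pi hu0 (by linarith)
  have hs1 : Real.sin u ≤ u := (Real.sin_lt hu0).le
  have hs2 : u - u^3/4 < Real.sin u := by
    have := Real.sin_gt_sub_cube hu0; nlinarith [pow_pos hu0 3]
  have hs3 : u/2 ≤ Real.sin u := ar1 hu0 hu1 hs2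
  have hsle1 : Real.sin u ≤ 1 := Real.sin_le_one u
  have ht0 : (0:ℝ) < Real.sin u ^ ((1:ℝ)/7) := Real.rpow_pos_of_pos hs _
  have ht1 : Real.sin u ^ ((1:ℝ)/7) ≤ 1 := Real.rpow_le_one hs.le hsle1 (by norm_num)
  set t := Real.sin u ^ ((1:ℝ)/7) with htd
  have ht5 : t^5 = Real.sin u ^ ((5:ℝ)/7) := by
    rw [htd, ← Real.rpow_natCast (Real.sin u ^ ((1:ℝ)/7)) 5, ← Real.rpow_mul hs.le]
    norm_num
  have ht12 : t^12 = Real.sin u ^ ((12:ℝ)/7) := by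
    rw [htd, ← Real.rpow_natCast (Real.sin u ^ ((1:ℝ)/7)) 12, ← Real.rpow_mul hs.le]
    norm_num
  have hu57 : (1:ℝ) ≤ u ^ (-(5:ℝ)/7) :=
    Real.one_le_rpow_of_pos_of_le_one_of_nonpos hu0 (by linarith) (by norm_num)
  have hu57pos : (0:ℝ) < u ^ (-(5:ℝ)/7) := Real.rpow_pos_of_pos hu0 _
  -- Term 1
  have T1 : |PP u * t^2| ≤ CP * u ^ (-(5:ℝ)/7) := by
    rw [abs_mul, abs_of_pos (pow_pos ht0 2)]
    have htt : t^2 ≤ 1 := by nlinarith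
    exact ar0 (hCP u ⟨hu0.le, hu1.le⟩) htt (by positivity) hu57
  -- Term 2
  have hp57 : (0:ℝ) < u ^ ((5:ℝ)/7) := Real.rpow_pos_of_pos hu0 _
  have h2a : u ^ ((5:ℝ)/7) ≤ 2 * t^5 := by
    have e1 : ((u/2):ℝ) ^ ((5:ℝ)/7) ≤ t^5 := by
      rw [ht5]; exact Real.rpow_le_rpow (by positivity) hs3 (by norm_num)
    have e2 : ((u/2):ℝ)^((5:ℝ)/7) = u^((5:ℝ)/7) / 2^((5:ℝ)/7) :=
      Real.div_rpow hu0.le (by norm_num) _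
    have e3 : (2:ℝ)^((5:ℝ)/7) ≤ 2 := by
      calc (2:ℝ)^((5:ℝ)/7) ≤ 2^(1:ℝ) :=
            Real.rpow_le_rpow_of_exponent_le (by norm_num) (by norm_num)
        _ = 2 := Real.rpow_one 2
    have e4 : u^((5:ℝ)/7) / 2 ≤ u^((5:ℝ)/7) / 2^((5:ℝ)/7) :=
      div_le_div_of_nonneg_left hp57.le (by positivity) e3
    rw [e2] at e1
    linarith
  have T2 : |QQ u / t^5| ≤ 2*CQ * u ^ (-(5:ℝ)/7) := by
    rw [abs_div, abs_of_pos (pow_pos ht0 5)]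
    have h1 : |QQ u| ≤ CQ := hCQ u ⟨hu0.le, hu1.le⟩
    have hst : 1/t^5 ≤ 2 * u^(-(5:ℝ)/7) := by
      rw [show (-(5:ℝ)/7) = -((5:ℝ)/7) by norm_num, Real.rpow_neg hu0.le]
      have h6 : 1/t^5 ≤ 1/(u^((5:ℝ)/7)/2) :=
        one_div_le_one_div_of_le (by positivity) (by linarith)
      rwa [one_div_div, div_eq_mul_inv] at h6
    calc |QQ u| / t^5 = |QQ u| * (1/t^5) := by ring
      _ ≤ CQ * (2 * u^(-(5:ℝ)/7)) := mul_le_mul h1 hst (by positivity) hCQ0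
      _ = 2*CQ * u ^ (-(5:ℝ)/7) := by ring
  -- Term 3
  have hc2 : Real.cos u^2 = 1 - Real.sin u^2 := Real.cos_sq' u
  set s := Real.sin u
  have hz1 : 1 ≤ u/s := (one_le_div hs).2 hs1
  have hz2 : u/s ≤ 2 := by rw [div_le_iff₀ hs]; linarith
  set W := (u/s) ^ ((12:ℝ)/7) with hWd
  have hW1 : 1 ≤ W := Real.one_le_rpow hz1 (by norm_num)
  have hW2 : W ≤ (u/s)^2 := by
    calc W ≤ (u/s) ^ ((2:ℝ)) := Real.rpow_le_rpow_of_exponent_le hz1 (by norm_num)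
      _ = (u/s)^(2:ℕ) := by
          rw [← Real.rpow_natCast (u/s) 2]; norm_num
  have hW4 : W ≤ 4 := by
    have h4 := pow_le_pow_left₀ (by positivity : (0:ℝ) ≤ u/s) hz2 2
    norm_num at h4
    linarith
  have hWu : W - 1 ≤ u := by linarith [ar2 hu0 hu1 hs hs1 hs2]
  set D := (Real.cos u^2/(π/2-u))^2 with hDd
  have hdenpos : (0:ℝ) < (π/2-u)^2*π^2 := mul_pos (pow_pos hq 2) (pow_pos (by linarith) 2)
  have hD : |D - 4/π^2| ≤ 4*u := by
    rw [hDd, hc2, div_pow, div_sub_div _ _ (pow_ne_zero 2 hq.ne') (pow_ne_zero 2 hπ0),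
      abs_div, abs_of_pos hdenpos]
    calc |(1 - s^2)^2*π^2 - (π/2-u)^2*4| / ((π/2-u)^2*π^2)
        ≤ 36*u/9 := div_le_div₀ (by positivity) (ar3 hu0 hu1 hs.le hs1) (by norm_num)
          (ar4 hu0 hu1)
      _ ≤ 4*u := by linarith
  have hM : |D*W - 4/π^2| ≤ 17*u := ar5 hD hW1 hW4 hWu hu0
  -- rewrite main term
  have h12 : u ^ (-(12:ℝ)/7) = (u^((12:ℝ)/7))⁻¹ := by
    rw [show (-(12:ℝ)/7) = -((12:ℝ)/7) by norm_num, Real.rpow_neg hu0.le]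
  have hu12pos : (0:ℝ) < u ^ ((12:ℝ)/7) := Real.rpow_pos_of_pos hu0 _
  have hu12pos' : (0:ℝ) < u ^ (-(12:ℝ)/7) := by rw [h12]; positivity
  have hWs : W = u^((12:ℝ)/7) / s^((12:ℝ)/7) := by
    rw [hWd]; exact Real.div_rpow hu0.le hs.le _
  have e : D / t^12 = D * W * u ^ (-(12:ℝ)/7) := by
    rw [hWs, h12, ht12]
    have hsp : (0:ℝ) < s^((12:ℝ)/7) := Real.rpow_pos_of_pos hs _
    field_simp
  have hsplit : PP u * t^2 + QQ u / t^5 - 43/49 * D / t^12 + (172/(49*π^2)) * u ^ (-(12:ℝ)/7)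
      = PP u * t^2 + QQ u / t^5 + (-(43/49)) * ((D * W - 4/π^2) * u ^ (-(12:ℝ)/7)) := by
    rw [show (43:ℝ)/49 * D / t^12 = 43/49 * (D / t^12) by ring, e]
    field_simp
    ring
  have hconv : u * u ^ (-(12:ℝ)/7) = u ^ (-(5:ℝ)/7) := by
    rw [show (-(5:ℝ)/7) = 1 + (-(12:ℝ)/7) by norm_num, Real.rpow_add hu0, Real.rpow_one]
  have T3 : |(-(43/49)) * ((D * W - 4/π^2) * u ^ (-(12:ℝ)/7))| ≤ 15 * u ^ (-(5:ℝ)/7) := by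
    rw [abs_mul, abs_mul, abs_of_pos hu12pos']
    have h1 : |(-(43/49) : ℝ)| = 43/49 := by
      rw [abs_neg, abs_of_pos (by norm_num : (0:ℝ) < 43/49)]
    rw [h1]
    calc 43/49 * (|D*W - 4/π^2| * u ^ (-(12:ℝ)/7)) ≤ 43/49 * ((17*u) * u ^ (-(12:ℝ)/7)) := by
          apply mul_le_mul_of_nonneg_left _ (by norm_num)
          exact mul_le_mul_of_nonneg_right hM hu12pos'.le
      _ = 43/49 * 17 * (u * u ^ (-(12:ℝ)/7)) := by ring
      _ = 43/49 * 17 * u ^ (-(5:ℝ)/7) := by rw [hconv]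
      _ ≤ 15 * u ^ (-(5:ℝ)/7) := by linarith
  calc |PP u * t^2 + QQ u / t^5 - 43/49 * D / t^12 + (172/(49*π^2)) * u ^ (-(12:ℝ)/7)|
      = |PP u * t^2 + QQ u / t^5 + (-(43/49)) * ((D * W - 4/π^2) * u ^ (-(12:ℝ)/7))| := by
        rw [hsplit]
    _ ≤ |PP u * t^2 + QQ u / t^5| + |(-(43/49)) * ((D * W - 4/π^2) * u ^ (-(12:ℝ)/7))| :=
        abs_add_le _ _
    _ ≤ |PP u * t^2| + |QQ u / t^5| + |(-(43/49)) * ((D * W - 4/π^2) * u ^ (-(12:ℝ)/7))| := by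
        linarith [abs_add_le (PP u * t^2) (QQ u / t^5)]
    _ ≤ CP * u ^ (-(5:ℝ)/7) + 2*CQ * u ^ (-(5:ℝ)/7) + 15 * u ^ (-(5:ℝ)/7) := by
        linarith
    _ = (CP + 2*CQ + 15) * u ^ (-(5:ℝ)/7) := by ring

/-- For `m = 8`: with `ψ(u) = (sin(π/2−u)/(π/2−u)) · cos(π/2−u)^{1/7}`,
`Θ(u) = sin(π/2−u)^7 cos(π/2−u)` and
`F(u) = 6 ψψ'' + ψΘ⁻¹(Θψ)' − 7 (ψ')²`, one has
`F(u) = −(172/(49 π²)) u^{−12/7} + O(u^{−5/7})` as `u → 0⁺`. -/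
theorem stmt13 (ψ Θ F : ℝ → ℝ)
    (hψ : ∀ u, ψ u = (Real.sin (π / 2 - u) / (π / 2 - u)) *
        Real.cos (π / 2 - u) ^ ((1 : ℝ) / 7))
    (hΘ : ∀ u, Θ u = Real.sin (π / 2 - u) ^ 7 * Real.cos (π / 2 - u))
    (hF : ∀ u, F u = 6 * ψ u * deriv (deriv ψ) u
        + ψ u * (Θ u)⁻¹ * deriv (fun t => Θ t * ψ t) u
        - 7 * (deriv ψ u) ^ 2) :
    (fun u => F u + (172 / (49 * π ^ 2)) * u ^ (-(12 : ℝ) / 7)) =O[𝓝[>] (0 : ℝ)]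
      fun u => u ^ (-(5 : ℝ) / 7) := by
  obtain ⟨C, hC0, hC⟩ := main_bound
  rw [isBigO_iff]
  refine ⟨C, ?_⟩
  filter_upwards [Ioo_mem_nhdsGT_of_mem
    (by norm_num : (0:ℝ) ∈ Ico (0:ℝ) (1/2))] with u hu
  rw [Real.norm_eq_abs, Real.norm_eq_abs, abs_of_pos (Real.rpow_pos_of_pos hu.1 _),
    key_id ψ Θ F hψ hΘ hF hu.1 hu.2]
  exact hC u hu.1 hu.2
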